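/- Let (φ_M)_M be the sequence of solutions to the truncated mean-field equations i∂_t φ_M = A φ_M + F_M(φ_M) with common initial datum φ₀ ∈ D(𝒩²), ‖φ₀‖_{ℓ²} = 1, and let φ be its (strong) limit as M → ∞. Then φ satisfies the Duhamel form of the mean-field equation: φ(t) = e^{−itA} φ₀ − i ∫₀ᵗ e^{−i(t−s)A} F(φ(s)) ds, where F(φ) := −J(α_φ a* + conj(α_φ) a − |α_φ|²)φ with α_φ := ⟨φ, aφ⟩. -/

import Mathlib

namespace BoseHubbard

noncomputable section

open scoped BigOperators ComplexConjugate
open Complex Filter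

/-! ## The one-lattice-site Hilbert space ℓ²(ℂ), modeled by coefficient sequences -/

/-- A vector of `ℓ²(ℂ)`, given by its coefficients in the canonical basis `(|n⟩)ₙ`. -/
abbrev Seq : Type := ℕ → ℂ

/-- The `ℓ²` inner product `⟨φ, ψ⟩` (antilinear in the first argument). -/
def sInner (φ ψ : Seq) : ℂ := ∑' n, conj (φ n) * ψ n

/-- The squared `ℓ²` norm `‖φ‖²`. -/
def sNormSq (φ : Seq) : ℝ := ∑' n, ‖φ n‖ ^ 2

/-- Membership in `ℓ²(ℂ)`. -/
def MemL2 (φ : Seq) : Prop := Summable fun n => ‖φ n‖ ^ 2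

/-- The moment `⟨φ, 𝒩^k φ⟩` of the number operator, for a real exponent `k`. -/
def Nmom (k : ℝ) (φ : Seq) : ℝ := ∑' n : ℕ, (n : ℝ) ^ k * ‖φ n‖ ^ 2

/-- Finiteness of the moment `⟨φ, 𝒩^k φ⟩`. -/
def MemNmom (k : ℝ) (φ : Seq) : Prop := Summable fun n : ℕ => (n : ℝ) ^ k * ‖φ n‖ ^ 2

/-- The shifted moment `⟨φ, (𝒩+l)^k φ⟩`. -/
def NmomShift (k : ℝ) (l : ℕ) (φ : Seq) : ℝ := ∑' n : ℕ, ((n : ℝ) + l) ^ k * ‖φ n‖ ^ 2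

/-- Membership in the domain `D(𝒩^k)`, i.e. `φ ∈ ℓ²` and `𝒩^k φ ∈ ℓ²`. -/
def MemDomN (k : ℝ) (φ : Seq) : Prop := MemL2 φ ∧ MemNmom (2 * k) φ

/-- The annihilation operator `a`, acting on coefficients. -/
def opA (φ : Seq) : Seq := fun n => (Real.sqrt ((n : ℝ) + 1) : ℂ) * φ (n + 1)

/-- The creation operator `a*`, acting on coefficients (note `Real.sqrt 0 = 0` at `n = 0`). -/
def opAd (φ : Seq) : Seq := fun n => ((Real.sqrt (n : ℝ)) : ℂ) * φ (n - 1)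

/-- The order parameter `α_φ = ⟨φ, a φ⟩`. -/
def alphaOf (φ : Seq) : ℂ := sInner φ (opA φ)

/-- The mean-field operator
`h^φ = -J(α_φ a* + conj α_φ a - |α_φ|²) + (J-μ)𝒩 + (U/2)𝒩(𝒩-1)` applied to `ψ`. -/
def hMF (J μ U : ℝ) (φ ψ : Seq) : Seq := fun n =>
  (-(J : ℂ)) * (alphaOf φ * opAd ψ n + conj (alphaOf φ) * opA ψ n
      - ((‖alphaOf φ‖ : ℂ)) ^ 2 * ψ n)
    + (((J : ℂ) - (μ : ℂ)) * (n : ℂ) + ((U : ℂ) / 2) * (n : ℂ) * ((n : ℂ) - 1)) * ψ n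

/-- `φ : ℝ → Seq` solves the mean-field equation `i ∂ₜ φ(t) = h^{φ(t)} φ(t)`
(coefficientwise, with `φ(t) ∈ ℓ²` and finite number of particles). -/
def IsMFSolution (J μ U : ℝ) (φ : ℝ → Seq) : Prop :=
  (∀ t, MemL2 (φ t)) ∧ (∀ t, MemNmom 1 (φ t)) ∧
    ∀ t n, HasDerivAt (fun s => φ s n) (-Complex.I * hMF J μ U (φ t) (φ t) n) t

/-! ## The truncated mean-field dynamics -/

/-- The eigenvalue of the linear operator `A = (J-μ)𝒩 + (U/2)𝒩(𝒩-1)` on `|n⟩`. -/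
def Acoef (J μ U : ℝ) (n : ℕ) : ℂ :=
  ((J : ℂ) - (μ : ℂ)) * (n : ℂ) + ((U : ℂ) / 2) * (n : ℂ) * ((n : ℂ) - 1)

/-- The linear operator `A = (J-μ)𝒩 + (U/2)𝒩(𝒩-1)`. -/
def opALin (J μ U : ℝ) (ψ : Seq) : Seq := fun n => Acoef J μ U n * ψ n

/-- The unitary group `e^{-itA}` generated by `A`. -/
def expA (J μ U : ℝ) (t : ℝ) (φ : Seq) : Seq :=
  fun n => Complex.exp (-Complex.I * (t : ℂ) * Acoef J μ U n) * φ n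

/-- The truncated annihilation operator `a_M = a 1_{𝒩 ≤ M}`. -/
def opAM (M : ℝ) (φ : Seq) : Seq :=
  fun n => if (n : ℝ) + 1 ≤ M then (Real.sqrt ((n : ℝ) + 1) : ℂ) * φ (n + 1) else 0

/-- The truncated creation operator `a*_M = 1_{𝒩 ≤ M} a*`. -/
def opAdM (M : ℝ) (φ : Seq) : Seq := fun n => if (n : ℝ) ≤ M then opAd φ n else 0

/-- The truncated order parameter `α_M = ⟨φ, a_M φ⟩`. -/
def alphaM (M : ℝ) (φ : Seq) : ℂ := sInner φ (opAM M φ)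

/-- The truncated nonlinearity `F_M(φ) = -J(α_M a*_M + conj α_M a_M - |α_M|²) φ`. -/
def FM (J M : ℝ) (φ : Seq) : Seq := fun n =>
  (-(J : ℂ)) * (alphaM M φ * opAdM M φ n + conj (alphaM M φ) * opAM M φ n
    - ((‖alphaM M φ‖ : ℂ)) ^ 2 * φ n)

/-- The truncated mean-field operator `h_M^{α_M(φ)} = A - J(α_M a*_M + conj α_M a_M - |α_M|²)`
applied to `ψ`. -/
def hTrunc (J μ U M : ℝ) (φ ψ : Seq) : Seq := fun n =>
  opALin J μ U ψ n + (-(J : ℂ)) * (alphaM M φ * opAdM M ψ n + conj (alphaM M φ) * opAM M ψ n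
    - ((‖alphaM M φ‖ : ℂ)) ^ 2 * ψ n)

/-- Differentiability in the `ℓ²` sense at time `t`, with derivative `v`. -/
def HasL2DerivAt (φ : ℝ → Seq) (v : Seq) (t : ℝ) : Prop :=
  Tendsto (fun h : ℝ => sNormSq (fun n => (φ (t + h) n - φ t n) / (h : ℂ) - v n))
    (nhdsWithin 0 {(0 : ℝ)}ᶜ) (nhds 0)

/-- `φ : ℝ → Seq` is a (global, strong) solution of the truncated mean-field equation
`i ∂ₜ φ_M = A φ_M + F_M(φ_M)`, taking values in `D(𝒩²)`. -/
def IsTruncSolution (J μ U M : ℝ) (φ : ℝ → Seq) : Prop :=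
  (∀ t, MemDomN 2 (φ t)) ∧
    ∀ t, HasL2DerivAt φ (fun n => -Complex.I * hTrunc J μ U M (φ t) (φ t) n) t

/-- Continuity of `t ↦ φ(t)` in the norm of `D(𝒩²)`. -/
def ContinuousInDom2 (φ : ℝ → Seq) : Prop :=
  ∀ t, Tendsto (fun s =>
      sNormSq (fun n => φ s n - φ t n) + sNormSq (fun n => ((n : ℂ)) ^ 2 * (φ s n - φ t n)))
    (nhds t) (nhds 0)

/-- Continuity of `t ↦ v(t)` in the `ℓ²` norm. -/
def ContinuousInL2 (v : ℝ → Seq) : Prop :=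
  ∀ t, Tendsto (fun s => sNormSq (fun n => v s n - v t n)) (nhds t) (nhds 0)

/-- The (untruncated) nonlinearity `F(φ) = -J(α_φ a* + conj α_φ a - |α_φ|²) φ`. -/
def Ffull (J : ℝ) (φ : Seq) : Seq := fun n =>
  (-(J : ℂ)) * (alphaOf φ * opAd φ n + conj (alphaOf φ) * opA φ n
    - ((‖alphaOf φ‖ : ℂ)) ^ 2 * φ n)

/-! ## Operators on ℓ²(ℂ), given by their kernels (matrices) in the canonical basis -/

/-- The identity kernel. -/
def idKer : ℕ → ℕ → ℂ := fun m n => if m = n then 1 else 0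

/-- The kernel of the rank-one projection `p_φ = |φ⟩⟨φ|`. -/
def projKer (φ : Seq) : ℕ → ℕ → ℂ := fun m n => φ m * conj (φ n)

/-- The kernel of `q_φ = 1 - p_φ`. -/
def qKer (φ : Seq) : ℕ → ℕ → ℂ := fun m n => idKer m n - projKer φ m n

/-- The product of two kernels. -/
def kerMul (A B : ℕ → ℕ → ℂ) : ℕ → ℕ → ℂ := fun m n => ∑' k, A m k * B k n

/-- The trace of a kernel. -/
def kerTr (A : ℕ → ℕ → ℂ) : ℂ := ∑' m, A m m

/-- A kernel is positive semidefinite: hermitian with nonnegative quadratic form. -/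
def kerPosSemidef (γ : ℕ → ℕ → ℂ) : Prop :=
  (∀ m n, γ n m = conj (γ m n)) ∧
    ∀ v : ℕ →₀ ℂ, 0 ≤ (∑ m ∈ v.support, ∑ n ∈ v.support, conj (v m) * γ m n * v n).re

/-- `c` is a bound for the operator norm of the kernel `B`. -/
def kerOpNormBound (B : ℕ → ℕ → ℂ) (c : ℝ) : Prop :=
  ∀ v w : ℕ →₀ ℂ,
    ‖∑ m ∈ v.support, ∑ n ∈ w.support, conj (v m) * B m n * w n‖ ≤
      c * Real.sqrt (∑ m ∈ v.support, ‖v m‖ ^ 2) * Real.sqrt (∑ n ∈ w.support, ‖w n‖ ^ 2)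

/-- The operator norm of a kernel. -/
def kerOpNorm (B : ℕ → ℕ → ℂ) : ℝ := sInf {c | 0 ≤ c ∧ kerOpNormBound B c}

/-- The trace norm `‖T‖_{L¹}`, via duality with bounded operators:
`‖T‖₁ = sup { |Tr(T B)| : ‖B‖ ≤ 1 }`. -/
def traceNorm (T : ℕ → ℕ → ℂ) : ℝ :=
  sSup {r | ∃ B z, kerOpNormBound B 1 ∧
      HasSum (fun q : ℕ × ℕ => T q.1 q.2 * B q.2 q.1) z ∧ r = ‖z‖}

/-- The kernel of `q_φ g(𝒩) q_φ` for a diagonal operator `g(𝒩)`. -/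
def qDiagq (g : ℕ → ℝ) (φ : Seq) : ℕ → ℕ → ℂ := fun m n =>
  (if m = n then ((g m : ℝ) : ℂ) else 0)
    - (((g m : ℝ) : ℂ) + ((g n : ℝ) : ℂ)) * (φ m * conj (φ n))
    + (∑' j, ((g j : ℝ) : ℂ) * ((‖φ j‖ : ℂ)) ^ 2) * (φ m * conj (φ n))

/-! ## The lattice `Λ = (ℤ/LZ)^d` and the Fock space `ℱ = ℓ²(ℂ)^{⊗|Λ|}` -/

/-- A lattice site of `Λ = (ℤ/Lℤ)^d`. -/
abbrev Site (d L : ℕ) : Type := Fin d → ZMod L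

/-- An occupation-number configuration, labeling the canonical basis of `ℱ`. -/
abbrev Cfg (d L : ℕ) : Type := Site d L → ℕ

/-- A vector of the Fock space `ℱ`, given by its coefficients. -/
abbrev FSeq (d L : ℕ) : Type := Cfg d L → ℂ

/-- The kernel of an operator on the Fock space `ℱ`. -/
abbrev FKer (d L : ℕ) : Type := Cfg d L → Cfg d L → ℂ

/-- Nearest neighbours in `Λ`. -/
def nbr {d L : ℕ} (x y : Site d L) : Prop :=
  ∃ i : Fin d, y = Function.update x i (x i + 1) ∨ y = Function.update x i (x i - 1)

/-- The annihilation operator `a_x` at site `x`. -/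
def fA {d L : ℕ} (x : Site d L) (ψ : FSeq d L) : FSeq d L :=
  fun n => (Real.sqrt ((n x : ℝ) + 1) : ℂ) * ψ (Function.update n x (n x + 1))

/-- The creation operator `a*_x` at site `x`. -/
def fAd {d L : ℕ} (x : Site d L) (ψ : FSeq d L) : FSeq d L :=
  fun n => ((Real.sqrt (n x : ℝ)) : ℂ) * ψ (Function.update n x (n x - 1))

open scoped Classical in
/-- The Bose–Hubbard Hamiltonian
`H_d = -(J/2d) Σ_{⟨x,y⟩}(a*_x a_y + a*_y a_x) + Σ_x ((J-μ)𝒩_x + (U/2)𝒩_x(𝒩_x-1))`,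
where the sum over unordered nearest-neighbour pairs of `a*_x a_y + a*_y a_x` is written as
the sum over ordered nearest-neighbour pairs of `a*_x a_y`. -/
def HBH (d L : ℕ) [NeZero L] (J μ U : ℝ) (ψ : FSeq d L) : FSeq d L := fun n =>
  (-(J : ℂ) / (2 * (d : ℂ))) *
      ∑ x : Site d L, ∑ y : Site d L, (if nbr x y then fAd x (fA y ψ) n else 0)
    + (∑ x : Site d L, Acoef J μ U (n x)) * ψ n

/-- `Ψ : ℝ → FSeq d L` is a normalized solution of the Schrödinger equation
`i ∂ₜ Ψ = H_d Ψ` (coefficientwise). -/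
def IsSchrodingerSolution (d L : ℕ) [NeZero L] (J μ U : ℝ) (Ψ : ℝ → FSeq d L) : Prop :=
  (∀ t, HasSum (fun n => ‖Ψ t n‖ ^ 2) 1) ∧
    ∀ t n, HasDerivAt (fun s => Ψ s n) (-Complex.I * HBH d L J μ U (Ψ t) n) t

/-- `γ : ℝ → FKer d L` solves the von Neumann equation `i ∂ₜ γ = [H_d, γ]`
(coefficientwise; we use that the matrix of `H_d` in the canonical basis is real symmetric). -/
def IsVNSolution (d L : ℕ) [NeZero L] (J μ U : ℝ) (γ : ℝ → FKer d L) : Prop :=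
  ∀ t m n, HasDerivAt (fun s => γ s m n)
    (-Complex.I * (HBH d L J μ U (fun k => γ t k n) m - HBH d L J μ U (fun k => γ t m k) n)) t

/-- A Fock-space kernel is positive semidefinite. -/
def FKerPosSemidef {d L : ℕ} (γ : FKer d L) : Prop :=
  (∀ m n, γ n m = conj (γ m n)) ∧
    ∀ v : Cfg d L →₀ ℂ, 0 ≤ (∑ m ∈ v.support, ∑ n ∈ v.support, conj (v m) * γ m n * v n).re

/-- (Diagonal) trace-class condition for a positive Fock-space kernel. -/
def FKerTraceClass {d L : ℕ} (γ : FKer d L) : Prop := Summable fun n => (γ n n).re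

/-- The kernel has trace one. -/
def FKerTraceOne {d L : ℕ} (γ : FKer d L) : Prop := HasSum (fun n => γ n n) 1

/-- The one-lattice-site reduced density matrix
`γ^{(1)} = (1/|Λ|) Σ_{x∈Λ} Tr_{Λ∖{x}} γ`, as a kernel on `ℕ`. -/
def reduced1 (d L : ℕ) [NeZero L] (γ : FKer d L) : ℕ → ℕ → ℂ := fun j k =>
  (1 / ((L : ℂ) ^ d)) * ∑ x : Site d L,
    ∑' c : Cfg d L, if c x = 0 then γ (Function.update c x j) (Function.update c x k) else 0

/-- The trace `Tr(γ H_d)` (using that the matrix of `H_d` is real symmetric). -/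
def trGammaH (d L : ℕ) [NeZero L] (J μ U : ℝ) (γ : FKer d L) : ℂ :=
  ∑' n : Cfg d L, HBH d L J μ U (fun k => γ n k) n

/-! ## Wave-function expressions on Fock space -/

/-- The inner product on Fock space. -/
def fInner {d L : ℕ} (Φ Ψ : FSeq d L) : ℂ := ∑' n, conj (Φ n) * Ψ n

/-- The projection `p_x = |φ⟩⟨φ|` acting at site `x`. -/
def fP {d L : ℕ} (φ : Seq) (x : Site d L) (ψ : FSeq d L) : FSeq d L :=
  fun n => φ (n x) * ∑' k, conj (φ k) * ψ (Function.update n x k)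

/-- The complementary projection `q_x = 1 - p_x` acting at site `x`. -/
def fQ {d L : ℕ} (φ : Seq) (x : Site d L) (ψ : FSeq d L) : FSeq d L :=
  fun n => ψ n - fP φ x ψ n

/-- The mean-field operator `h^φ_x` acting at site `x`. -/
def fHmf {d L : ℕ} (J μ U : ℝ) (φ : Seq) (x : Site d L) (ψ : FSeq d L) : FSeq d L :=
  fun n => (-(J : ℂ)) * (alphaOf φ * fAd x ψ n + conj (alphaOf φ) * fA x ψ n
      - ((‖alphaOf φ‖ : ℂ)) ^ 2 * ψ n)
    + Acoef J μ U (n x) * ψ n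

/-- `K^{(2)}_{x,y} = a*_x a_y + a*_y a_x`. -/
def fK2 {d L : ℕ} (x y : Site d L) (ψ : FSeq d L) : FSeq d L :=
  fun n => fAd x (fA y ψ) n + fAd y (fA x ψ) n

/-- `K^{(3)}_{x,y} = K^{(2)}_{x,y} - α_φ a*_x - conj α_φ a_x`. -/
def fK3 {d L : ℕ} (φ : Seq) (x y : Site d L) (ψ : FSeq d L) : FSeq d L :=
  fun n => fK2 x y ψ n - alphaOf φ * fAd x ψ n - conj (alphaOf φ) * fA x ψ n

/-- `K^{(4)}_{x,y} = K^{(3)}_{x,y} - α_φ a*_y - conj α_φ a_y + 2|α_φ|²`. -/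
def fK4 {d L : ℕ} (φ : Seq) (x y : Site d L) (ψ : FSeq d L) : FSeq d L :=
  fun n => fK3 φ x y ψ n - alphaOf φ * fAd y ψ n - conj (alphaOf φ) * fA y ψ n
    + 2 * ((‖alphaOf φ‖ : ℂ)) ^ 2 * ψ n

open scoped Classical in
/-- The expectation `⟨Ψ, H̃ Ψ⟩` of the excitation Hamiltonian `H̃`; sums over unordered
nearest-neighbour pairs are written as half the sums over ordered pairs, and `+h.c.`
contributes a factor `2 Re`. -/
def tildeHExp (d L : ℕ) [NeZero L] (J : ℝ) (φ : Seq) (Ψ : FSeq d L) : ℝ :=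
  (-(J / (2 * d))) * (1 / 2) *
      ∑ x : Site d L, ∑ y : Site d L, (if nbr x y then
        2 * (fInner Ψ (fP φ x (fP φ y (fK2 x y (fQ φ x (fQ φ y Ψ)))))).re
          + 2 * (fInner Ψ (fP φ x (fQ φ y (fK2 x y (fQ φ x (fP φ y Ψ)))))).re
        else 0)
    + (-(J / d)) * (1 / 2) *
      ∑ x : Site d L, ∑ y : Site d L, (if nbr x y then
        2 * (fInner Ψ (fP φ x (fQ φ y (fK3 φ x y (fQ φ x (fQ φ y Ψ)))))).re else 0)
    + (-(J / (2 * d))) * (1 / 2) *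
      ∑ x : Site d L, ∑ y : Site d L, (if nbr x y then
        (fInner Ψ (fQ φ x (fQ φ y (fK4 φ x y (fQ φ x (fQ φ y Ψ)))))).re else 0)

/-- The quantity `g(t) = (1/|Λ|) Σ_x ⟨Ψ, (q_x 𝒩_x² q_x + q_x) Ψ⟩`. -/
def gFunc (d L : ℕ) [NeZero L] (φ : Seq) (Ψ : FSeq d L) : ℝ :=
  (1 / (L : ℝ) ^ d) * ∑ x : Site d L,
    ((fInner Ψ (fQ φ x (fun n => ((n x : ℂ)) ^ 2 * fQ φ x Ψ n))).re
      + (fInner Ψ (fQ φ x Ψ)).re)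

/-- The quantity `f(t) = (1/|Λ|) ⟨Ψ, (H_d + Σ_x (q_x h^φ_x q_x - h^φ_x + c q_x)) Ψ⟩`. -/
def fFunc (d L : ℕ) [NeZero L] (J μ U c : ℝ) (φ : Seq) (Ψ : FSeq d L) : ℝ :=
  (1 / (L : ℝ) ^ d) * (fInner Ψ (fun n => HBH d L J μ U Ψ n +
    ∑ x : Site d L,
      (fQ φ x (fHmf J μ U φ x (fQ φ x Ψ)) n - fHmf J μ U φ x Ψ n + (c : ℂ) * fQ φ x Ψ n))).re

/-- The time-dependent constant `C̃(s)` in the Gronwall estimate for `f`. -/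
def Ctilde (J U C1 : ℝ) (φ0 : Seq) (s : ℝ) : ℝ :=
  (C1 / U) * (1 + 1 / U + (Nmom 1 φ0) ^ 2) *
    (1 + ∑ j ∈ Finset.range 7,
      (8 * J * Real.sqrt (Nmom 1 φ0)) ^ j * NmomShift (4 - (j : ℝ) / 2) j φ0 * s ^ j
        / (Nat.factorial j))

/-! ### Auxiliary machinery for the proof of Statement 6 -/
/-! ### Auxiliary lemmas -/

lemma memL2_of_sq_le {f : Seq} {g : ℕ → ℝ} (hg : Summable g)
    (h : ∀ n, ‖f n‖ ^ 2 ≤ g n) : MemL2 f :=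
  Summable.of_nonneg_of_le (fun n => sq_nonneg _) h hg

lemma MemL2.const_mul {f : Seq} (hf : MemL2 f) (c : ℂ) : MemL2 (fun n => c * f n) := by
  refine memL2_of_sq_le (hf.mul_left (‖c‖^2)) fun n => ?_
  rw [norm_mul, mul_pow]

lemma MemL2.sub {f g : Seq} (hf : MemL2 f) (hg : MemL2 g) :
    MemL2 (fun n => f n - g n) := by
  refine memL2_of_sq_le ((hf.mul_left 2).add (hg.mul_left 2)) fun n => ?_
  have h1 : ‖f n - g n‖ ≤ ‖f n‖ + ‖g n‖ := norm_sub_le _ _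
  have h0 : (0:ℝ) ≤ ‖f n - g n‖ := norm_nonneg _
  nlinarith [sq_nonneg (‖f n‖ - ‖g n‖)]

lemma MemL2.add' {f g : Seq} (hf : MemL2 f) (hg : MemL2 g) :
    MemL2 (fun n => f n + g n) := by
  have := hf.sub (hg.const_mul (-1))
  refine memL2_of_sq_le this fun n => ?_
  simp only [neg_one_mul, sub_neg_eq_add]
  exact le_refl _

lemma sq_norm_le_sNormSq {f : Seq} (hf : MemL2 f) (n : ℕ) : ‖f n‖^2 ≤ sNormSq f :=
  Summable.le_tsum hf n (fun j _ => sq_nonneg _)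

lemma summable_pow4 {φ : Seq} (h : MemDomN 2 φ) :
    Summable fun n : ℕ => (n:ℝ)^(4:ℕ) * ‖φ n‖^2 := by
  have h2 := h.2
  unfold MemNmom at h2
  have he : ∀ n : ℕ, (n:ℝ)^((2:ℝ)*2) = (n:ℝ)^(4:ℕ) := by
    intro n; rw [show ((2:ℝ)*2) = ((4:ℕ):ℝ) by norm_num, Real.rpow_natCast]
  simpa [he] using h2

lemma summable_mul_pow1 {φ : Seq} (h : MemDomN 2 φ) :
    Summable fun n : ℕ => (n:ℝ) * ‖φ n‖^2 := by
  refine Summable.of_nonneg_of_le (fun n => by positivity) (fun n => ?_)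
    (h.1.add (summable_pow4 h))
  have hn : (n:ℝ) ≤ 1 + (n:ℝ)^(4:ℕ) := by
    rcases Nat.eq_zero_or_pos n with h0 | h1
    · simp [h0]
    · have h2 : (1:ℝ) ≤ (n:ℝ) := by exact_mod_cast h1
      have := le_self_pow₀ h2 (by norm_num : (4:ℕ) ≠ 0)
      linarith
  have := mul_le_mul_of_nonneg_right hn (by positivity : (0:ℝ) ≤ ‖φ n‖^2)
  linarith [this]

/-- The real value of `Acoef`. -/
def AcoefR (J μ U : ℝ) (n : ℕ) : ℝ := (J - μ) * n + U/2 * n * ((n:ℝ)-1)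

lemma Acoef_eq (J μ U : ℝ) (n : ℕ) : Acoef J μ U n = ((AcoefR J μ U n : ℝ) : ℂ) := by
  simp only [Acoef, AcoefR]
  push_cast
  ring

lemma abs_AcoefR_le (J μ U : ℝ) (n : ℕ) :
    |AcoefR J μ U n| ≤ (|J| + |μ| + |U|) * (1 + (n:ℝ)^2) := by
  have h1 : (0:ℝ) ≤ (n:ℝ) := Nat.cast_nonneg n
  have hJ : |J - μ| ≤ |J| + |μ| := abs_sub _ _
  have hn : |(n:ℝ) * ((n:ℝ) - 1)| ≤ 1 + (n:ℝ)^2 := by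
    rw [abs_le]; constructor <;> nlinarith
  calc |AcoefR J μ U n| ≤ |(J-μ)*(n:ℝ)| + |U/2 * (n:ℝ) * ((n:ℝ)-1)| := by
        unfold AcoefR; exact abs_add_le _ _
    _ = |J-μ| * (n:ℝ) + |U|/2 * |(n:ℝ) * ((n:ℝ)-1)| := by
        rw [abs_mul, _root_.abs_of_nonneg h1, mul_assoc, abs_mul, abs_div]
        norm_num
    _ ≤ (|J|+|μ|) * (n:ℝ) + |U|/2 * (1 + (n:ℝ)^2) := by gcongr
    _ ≤ _ := by nlinarith [abs_nonneg J, abs_nonneg μ, abs_nonneg U, sq_nonneg ((n:ℝ)-1)]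
lemma hasDerivAt_re_comp {f : ℝ → ℂ} {g : ℂ} {t : ℝ} (hf : HasDerivAt f g t) :
    HasDerivAt (fun s => (f s).re) g.re t :=
  (Complex.reCLM.hasFDerivAt).comp_hasDerivAt t hf

lemma hasDerivAt_im_comp {f : ℝ → ℂ} {g : ℂ} {t : ℝ} (hf : HasDerivAt f g t) :
    HasDerivAt (fun s => (f s).im) g.im t :=
  (Complex.imCLM.hasFDerivAt).comp_hasDerivAt t hf

lemma hasDerivAt_norm_sq_comp {f : ℝ → ℂ} {g : ℂ} {t : ℝ} (hf : HasDerivAt f g t) :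
    HasDerivAt (fun s => ‖f s‖^2) (2 * ((starRingEnd ℂ) (f t) * g).re) t := by
  have hre := hasDerivAt_re_comp hf
  have him := hasDerivAt_im_comp hf
  have h1 : HasDerivAt (fun s => (f s).re^2 + (f s).im^2)
      (2*(f t).re*g.re + 2*(f t).im*g.im) t := by
    simpa [mul_comm, mul_assoc, mul_left_comm] using ((hre.fun_pow 2).fun_add (him.fun_pow 2))
  have heq : (fun s => ‖f s‖^2) = fun s => (f s).re^2 + (f s).im^2 := by
    funext s
    rw [Complex.sq_norm, Complex.normSq_apply]; ring
  rw [heq]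
  convert h1 using 1
  simp [Complex.mul_re]
  ring

lemma norm_sq_const_of_deriv {f : ℝ → ℂ} {g : ℝ → ℂ}
    (hf : ∀ t, HasDerivAt f (g t) t) (hre : ∀ t, ((starRingEnd ℂ) (f t) * g t).re = 0)
    (t : ℝ) : ‖f t‖^2 = ‖f 0‖^2 := by
  have hD : ∀ s, HasDerivAt (fun u => ‖f u‖^2) 0 s := fun s => by
    simpa [hre s] using hasDerivAt_norm_sq_comp (hf s)
  exact is_const_of_deriv_eq_zero (fun s => (hD s).differentiableAt)
    (fun s => (hD s).deriv) t 0

lemma hasDerivAt_coeff {ψ : ℝ → Seq} {v : Seq} {t : ℝ}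
    (hsm : ∀ h : ℝ, Summable fun n => ‖(ψ (t+h) n - ψ t n)/(h:ℂ) - v n‖^2)
    (hd : HasL2DerivAt ψ v t) (n : ℕ) : HasDerivAt (fun s => ψ s n) (v n) t := by
  have key : Tendsto (fun h : ℝ => (ψ (t+h) n - ψ t n)/(h:ℂ) - v n)
      (nhdsWithin 0 {(0:ℝ)}ᶜ) (nhds 0) := by
    rw [tendsto_zero_iff_norm_tendsto_zero]
    have h2 : Tendsto (fun h : ℝ => ‖(ψ (t+h) n - ψ t n)/(h:ℂ) - v n‖^2)
        (nhdsWithin 0 {(0:ℝ)}ᶜ) (nhds 0) := by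
      apply squeeze_zero (fun h => sq_nonneg _) (fun h => sq_norm_le_sNormSq (hsm h) n) hd
    have h3 := (Real.continuous_sqrt.tendsto 0).comp h2
    simp only [Function.comp_def, Real.sqrt_zero] at h3
    convert h3 using 2 with h
    rw [Real.sqrt_sq (norm_nonneg _)]
  have key2 : Tendsto (fun h : ℝ => (ψ (t+h) n - ψ t n)/(h:ℂ))
      (nhdsWithin 0 {(0:ℝ)}ᶜ) (nhds (v n)) := by
    have := key.add_const (v n)
    simpa using this
  rw [hasDerivAt_iff_tendsto_slope]
  have hmap : Filter.map (fun h : ℝ => t + h) (nhdsWithin 0 {(0:ℝ)}ᶜ)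
      = nhdsWithin t {t}ᶜ := by
    have := (Homeomorph.addLeft t).map_punctured_nhds_eq 0
    simpa using this
  rw [← hmap, tendsto_map'_iff]
  apply key2.congr
  intro h
  simp only [Function.comp_def, slope, vsub_eq_sub, add_sub_cancel_left,
    Complex.real_smul, Complex.ofReal_inv]
  rw [div_eq_inv_mul]
lemma memL2_shift_down {φ : Seq} (h : MemL2 φ) : Summable fun n : ℕ => ‖φ (n-1)‖^2 :=
  (summable_nat_add_iff 1).mp (by simpa [MemL2] using h)

lemma memL2_shift_up {φ : Seq} (h : MemL2 φ) : Summable fun n : ℕ => ‖φ (n+1)‖^2 :=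
  (summable_nat_add_iff 1).mpr h

lemma norm_sqrt_sq (x : ℝ) (hx : 0 ≤ x) : ‖((Real.sqrt x : ℝ):ℂ)‖^2 = x := by
  rw [Complex.norm_real, Real.norm_eq_abs, _root_.abs_of_nonneg (Real.sqrt_nonneg x),
    Real.sq_sqrt hx]

lemma memL2_opAdM (Mr : ℝ) {φ : Seq} (h : MemL2 φ) : MemL2 (opAdM Mr φ) := by
  refine memL2_of_sq_le ((memL2_shift_down h).mul_left (max Mr 0 + 1)) fun n => ?_
  unfold opAdM opAd
  split_ifs with hc
  · rw [norm_mul, mul_pow, norm_sqrt_sq _ (Nat.cast_nonneg n)]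
    have : (n:ℝ) ≤ max Mr 0 + 1 := by
      have := le_max_left Mr 0; linarith
    have h0 : (0:ℝ) ≤ ‖φ (n-1)‖^2 := by positivity
    nlinarith
  · simp; positivity

lemma memL2_opAM (Mr : ℝ) {φ : Seq} (h : MemL2 φ) : MemL2 (opAM Mr φ) := by
  refine memL2_of_sq_le ((memL2_shift_up h).mul_left (max Mr 0 + 1)) fun n => ?_
  unfold opAM
  split_ifs with hc
  · rw [norm_mul, mul_pow, norm_sqrt_sq _ (by positivity)]
    have : (n:ℝ) + 1 ≤ max Mr 0 + 1 := by
      have := le_max_left Mr 0; linarith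
    have h0 : (0:ℝ) ≤ ‖φ (n+1)‖^2 := by positivity
    nlinarith
  · simp; positivity

lemma memL2_opALin {J μ U : ℝ} {φ : Seq} (h : MemDomN 2 φ) : MemL2 (opALin J μ U φ) := by
  set C := (|J| + |μ| + |U|) with hC
  have hC0 : 0 ≤ C := by positivity
  refine memL2_of_sq_le ((h.1.mul_left (2*C^2)).add
    ((summable_pow4 h).mul_left (2*C^2))) fun n => ?_
  unfold opALin
  rw [norm_mul, Acoef_eq, mul_pow, Complex.norm_real, Real.norm_eq_abs]
  have h1 := abs_AcoefR_le J μ U n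
  have h2 : |AcoefR J μ U n|^2 ≤ C^2 * (1+(n:ℝ)^2)^2 := by
    rw [← hC] at h1
    nlinarith [abs_nonneg (AcoefR J μ U n), sq_nonneg (1+(n:ℝ)^2), Nat.cast_nonneg (α := ℝ) n]
  have h3 : C^2 * (1+(n:ℝ)^2)^2 ≤ 2*C^2 + 2*C^2*(n:ℝ)^(4:ℕ) := by
    nlinarith [sq_nonneg ((n:ℝ)^2 - 1), sq_nonneg C]
  have h0 : (0:ℝ) ≤ ‖φ n‖^2 := by positivity
  calc |AcoefR J μ U n|^2 * ‖φ n‖^2 ≤ (2*C^2 + 2*C^2*(n:ℝ)^(4:ℕ)) * ‖φ n‖^2 := by nlinarith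
    _ = 2*C^2 * ‖φ n‖^2 + 2*C^2 * ((n:ℝ)^(4:ℕ) * ‖φ n‖^2) := by ring

lemma memL2_hTrunc {J μ U : ℝ} (Mr : ℝ) {φ : Seq} (h : MemDomN 2 φ) :
    MemL2 (fun n => hTrunc J μ U Mr φ φ n) := by
  have e : (fun n => hTrunc J μ U Mr φ φ n) = fun n =>
      opALin J μ U φ n + (((-(J:ℂ)) * alphaM Mr φ) * opAdM Mr φ n
        + (((-(J:ℂ)) * (starRingEnd ℂ) (alphaM Mr φ)) * opAM Mr φ n
          + (((J:ℂ) * ((‖alphaM Mr φ‖:ℝ):ℂ)^2) * φ n))) := by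
    funext n; unfold hTrunc; ring
  rw [e]
  exact (memL2_opALin h).add' (((memL2_opAdM Mr h.1).const_mul _).add'
    (((memL2_opAM Mr h.1).const_mul _).add' (h.1.const_mul _)))

lemma trunc_coeff_deriv {J μ U : ℝ} {M : ℕ} {ψ : ℝ → Seq}
    (hs : IsTruncSolution J μ U (M:ℝ) ψ) (t : ℝ) (n : ℕ) :
    HasDerivAt (fun s => ψ s n)
      (-Complex.I * hTrunc J μ U (M:ℝ) (ψ t) (ψ t) n) t := by
  have hv : MemL2 (fun k => -Complex.I * hTrunc J μ U (M:ℝ) (ψ t) (ψ t) k) :=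
    (memL2_hTrunc _ (hs.1 t)).const_mul _
  refine hasDerivAt_coeff (fun h => ?_) (hs.2 t) n
  have h1 : MemL2 (fun k => (h:ℂ)⁻¹ * (ψ (t+h) k - ψ t k)) :=
    ((hs.1 (t+h)).1.sub (hs.1 t).1).const_mul _
  have h2 := h1.sub hv
  unfold MemL2 at h2
  exact h2.congr (fun k => by rw [div_eq_inv_mul])

lemma trunc_coeff_continuous {J μ U : ℝ} {M : ℕ} {ψ : ℝ → Seq}
    (hs : IsTruncSolution J μ U (M:ℝ) ψ) (n : ℕ) :
    Continuous (fun s => ψ s n) :=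
  continuous_iff_continuousAt.mpr fun t => (trunc_coeff_deriv hs t n).continuousAt

lemma alphaM_eq_sum (M : ℕ) (φ : Seq) :
    alphaM (M:ℝ) φ = ∑ n ∈ Finset.range M,
      (starRingEnd ℂ) (φ n) * (((Real.sqrt ((n:ℝ)+1) : ℝ):ℂ) * φ (n+1)) := by
  unfold alphaM sInner opAM
  rw [tsum_eq_sum (s := Finset.range M)]
  · refine Finset.sum_congr rfl fun n hn => ?_
    rw [if_pos]
    have h1 : n + 1 ≤ M := Finset.mem_range.mp hn
    have h2 : ((n:ℝ)+1) ≤ (M:ℝ) := by exact_mod_cast h1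
    exact h2
  · intro n hn
    rw [if_neg, mul_zero]
    have h1 : M ≤ n := by simpa using hn
    have h2 : (M:ℝ) ≤ (n:ℝ) := by exact_mod_cast h1
    linarith
lemma im_cancel (J : ℝ) (α P Q : ℂ) (c : ℝ)
    (h : (starRingEnd ℂ) P = Q + (c:ℂ) * α) :
    ((-(J:ℂ)) * (α * P + (starRingEnd ℂ) α * Q)).im = 0 := by
  have hP : P = (starRingEnd ℂ) Q + (c:ℂ) * (starRingEnd ℂ) α := by
    have := congrArg (starRingEnd ℂ) h
    simpa using this
  rw [hP]
  have e : α * ((starRingEnd ℂ) Q + (c:ℂ)*(starRingEnd ℂ) α) + (starRingEnd ℂ) α * Q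
      = (α * (starRingEnd ℂ) Q + (starRingEnd ℂ) (α * (starRingEnd ℂ) Q))
        + (c:ℂ)*(α * (starRingEnd ℂ) α) := by
    rw [map_mul]
    simp only [Complex.conj_conj]
    ring
  rw [e]
  rw [Complex.add_conj, Complex.mul_conj]
  simp [Complex.mul_im]

lemma conj_mul_hTrunc_eq {J μ U : ℝ} (M : ℕ) (z : Seq) (w : ℝ) (n : ℕ) (hn : n ≤ M) :
    (w:ℂ) * ((starRingEnd ℂ) (z n) * hTrunc J μ U (M:ℝ) z z n)
      = ((w * ((AcoefR J μ U n) + J * ‖alphaM (M:ℝ) z‖^2) * Complex.normSq (z n) : ℝ):ℂ)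
        + (-(J:ℂ)) * (alphaM (M:ℝ) z *
            ((w:ℂ) * ((starRingEnd ℂ) (z n) * (((Real.sqrt (n:ℝ) : ℝ):ℂ) * z (n-1))))
          + (starRingEnd ℂ) (alphaM (M:ℝ) z) *
            ((w:ℂ) * ((starRingEnd ℂ) (z n) * opAM (M:ℝ) z n))) := by
  have hzz : (starRingEnd ℂ) (z n) * z n = ((Complex.normSq (z n) : ℝ):ℂ) := by
    rw [Complex.normSq_eq_conj_mul_self]
  unfold hTrunc opALin opAdM opAd
  rw [if_pos (show ((n:ℝ) ≤ (M:ℝ)) from by exact_mod_cast hn), Acoef_eq]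
  push_cast
  linear_combination ((w:ℂ) * ((AcoefR J μ U n:ℝ):ℂ)
    + (w:ℂ)*(J:ℂ)*((‖alphaM (M:ℝ) z‖:ℝ):ℂ)^2) * hzz
lemma conj_re_neg_I_mul (a b : ℂ) :
    ((starRingEnd ℂ) a * (-Complex.I * b)).re = ((starRingEnd ℂ) a * b).im := by
  simp [Complex.mul_re, Complex.mul_im]; ring

lemma block_deriv_sum_zero {J μ U : ℝ} (M : ℕ) (z : Seq) (w : ℕ → ℝ) (c : ℝ)
    (hw : ∀ k, w (k+1) = w k + c) :
    ∑ n ∈ Finset.range (M+1),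
      w n * ((starRingEnd ℂ) (z n) * (-Complex.I * hTrunc J μ U (M:ℝ) z z n)).re = 0 := by
  set α := alphaM (M:ℝ) z with hα
  -- turn into the imaginary part of a complex sum
  have step1 : ∑ n ∈ Finset.range (M+1),
      w n * ((starRingEnd ℂ) (z n) * (-Complex.I * hTrunc J μ U (M:ℝ) z z n)).re
      = (∑ n ∈ Finset.range (M+1),
          (w n:ℂ) * ((starRingEnd ℂ) (z n) * hTrunc J μ U (M:ℝ) z z n)).im := by
    rw [Complex.im_sum]
    refine Finset.sum_congr rfl fun n _ => ?_
    rw [conj_re_neg_I_mul]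
    simp [Complex.mul_im]
  rw [step1]
  -- decompose the complex sum
  set P := ∑ n ∈ Finset.range (M+1),
    (w n:ℂ) * ((starRingEnd ℂ) (z n) * (((Real.sqrt (n:ℝ) : ℝ):ℂ) * z (n-1))) with hP
  set Q := ∑ n ∈ Finset.range (M+1),
    (w n:ℂ) * ((starRingEnd ℂ) (z n) * opAM (M:ℝ) z n) with hQ
  have step2 : (∑ n ∈ Finset.range (M+1),
      (w n:ℂ) * ((starRingEnd ℂ) (z n) * hTrunc J μ U (M:ℝ) z z n))
      = ∑ n ∈ Finset.range (M+1),
          (((w n * ((AcoefR J μ U n) + J * ‖α‖^2) * Complex.normSq (z n)) : ℝ):ℂ)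
        + ∑ n ∈ Finset.range (M+1), (-(J:ℂ)) *
          (α * ((w n:ℂ) * ((starRingEnd ℂ) (z n) * (((Real.sqrt (n:ℝ) : ℝ):ℂ) * z (n-1))))
            + (starRingEnd ℂ) α * ((w n:ℂ) * ((starRingEnd ℂ) (z n) * opAM (M:ℝ) z n))) := by
    rw [← Finset.sum_add_distrib]
    refine Finset.sum_congr rfl fun n hn => ?_
    have hn' : n ≤ M := Nat.lt_succ_iff.mp (Finset.mem_range.mp hn)
    rw [conj_mul_hTrunc_eq M z (w n) n hn', hα]
  have step3 : (∑ n ∈ Finset.range (M+1), (-(J:ℂ)) *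
          (α * ((w n:ℂ) * ((starRingEnd ℂ) (z n) * (((Real.sqrt (n:ℝ) : ℝ):ℂ) * z (n-1))))
            + (starRingEnd ℂ) α * ((w n:ℂ) * ((starRingEnd ℂ) (z n) * opAM (M:ℝ) z n))))
      = (-(J:ℂ)) * (α * P + (starRingEnd ℂ) α * Q) := by
    rw [← Finset.mul_sum, Finset.sum_add_distrib, ← Finset.mul_sum, ← Finset.mul_sum, hP, hQ]
  rw [step2, step3, ← Complex.ofReal_sum]
  -- Q as a sum over range M
  have hQ' : Q = ∑ n ∈ Finset.range M,
      (w n:ℂ) * ((starRingEnd ℂ) (z n) * (((Real.sqrt ((n:ℝ)+1) : ℝ):ℂ) * z (n+1))) := by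
    rw [hQ, Finset.sum_range_succ]
    have hlast : opAM (M:ℝ) z M = 0 := by
      unfold opAM; rw [if_neg]; push_cast; linarith
    rw [hlast]
    simp only [mul_zero, add_zero]
    refine Finset.sum_congr rfl fun n hn => ?_
    have h1 : n < M := Finset.mem_range.mp hn
    have h2 : ((n:ℝ)+1) ≤ (M:ℝ) := by exact_mod_cast h1
    unfold opAM
    rw [if_pos h2]
  -- P reindexed
  have hP' : P = ∑ n ∈ Finset.range M,
      (w (n+1):ℂ) * ((starRingEnd ℂ) (z (n+1)) * (((Real.sqrt ((n:ℝ)+1) : ℝ):ℂ) * z n)) := by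
    rw [hP, Finset.sum_range_succ']
    have h0 : (w 0:ℂ) * ((starRingEnd ℂ) (z 0) * (((Real.sqrt ((0:ℕ):ℝ) : ℝ):ℂ) * z (0-1))) = 0 := by
      simp
    rw [h0, add_zero]
    refine Finset.sum_congr rfl fun n hn => ?_
    push_cast
    ring_nf
  -- key relation: conj P = Q + c • α
  have hrel : (starRingEnd ℂ) P = Q + (c:ℂ) * α := by
    rw [hP', map_sum, hQ', hα, alphaM_eq_sum, Finset.mul_sum, ← Finset.sum_add_distrib]
    refine Finset.sum_congr rfl fun n hn => ?_
    rw [map_mul, map_mul, map_mul, Complex.conj_conj, Complex.conj_ofReal,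
      Complex.conj_ofReal, hw n]
    push_cast
    ring
  rw [Complex.add_im, Complex.ofReal_im, im_cancel J α P Q c hrel, zero_add]
lemma conj_mul_neg_I_real_re (z : ℂ) (r : ℝ) :
    ((starRingEnd ℂ) z * (-Complex.I * (((r:ℝ):ℂ) * z))).re = 0 := by
  simp [Complex.mul_re, Complex.mul_im]; ring

lemma block_weight_const {J μ U : ℝ} {M : ℕ} {ψ : ℝ → Seq}
    (hs : IsTruncSolution J μ U (M:ℝ) ψ) (w : ℕ → ℝ) (c : ℝ)
    (hw : ∀ k, w (k+1) = w k + c) (t : ℝ) :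
    ∑ n ∈ Finset.range (M+1), w n * ‖ψ t n‖^2
      = ∑ n ∈ Finset.range (M+1), w n * ‖ψ 0 n‖^2 := by
  have hD : ∀ s, HasDerivAt (fun u => ∑ n ∈ Finset.range (M+1), w n * ‖ψ u n‖^2) 0 s := by
    intro s
    have h1 : HasDerivAt (fun u => ∑ n ∈ Finset.range (M+1), w n * ‖ψ u n‖^2)
        (∑ n ∈ Finset.range (M+1), w n * (2 * ((starRingEnd ℂ) (ψ s n) *
          (-Complex.I * hTrunc J μ U (M:ℝ) (ψ s) (ψ s) n)).re)) s := by
      apply HasDerivAt.fun_sum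
      intro n _
      exact (hasDerivAt_norm_sq_comp (trunc_coeff_deriv hs s n)).const_mul (w n)
    have h0 := block_deriv_sum_zero (J:=J) (μ:=μ) (U:=U) M (ψ s) w c hw
    have e : (∑ n ∈ Finset.range (M+1), w n * (2 * ((starRingEnd ℂ) (ψ s n) *
          (-Complex.I * hTrunc J μ U (M:ℝ) (ψ s) (ψ s) n)).re))
        = 2 * ∑ n ∈ Finset.range (M+1), w n * ((starRingEnd ℂ) (ψ s n) *
          (-Complex.I * hTrunc J μ U (M:ℝ) (ψ s) (ψ s) n)).re := by
      rw [Finset.mul_sum]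
      exact Finset.sum_congr rfl fun n _ => by ring
    rw [e, h0, mul_zero] at h1
    exact h1
  exact is_const_of_deriv_eq_zero (fun s => (hD s).differentiableAt)
    (fun s => (hD s).deriv) t 0

lemma tail_norm_const {J μ U : ℝ} {M : ℕ} {ψ : ℝ → Seq}
    (hs : IsTruncSolution J μ U (M:ℝ) ψ) {n : ℕ} (hn : M < n) (t : ℝ) :
    ‖ψ t n‖^2 = ‖ψ 0 n‖^2 := by
  have hMn : (M:ℝ) < (n:ℝ) := by exact_mod_cast hn
  apply norm_sq_const_of_deriv (g := fun s => -Complex.I * hTrunc J μ U (M:ℝ) (ψ s) (ψ s) n)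
    (fun s => trunc_coeff_deriv hs s n)
  intro s
  have h1 : hTrunc J μ U (M:ℝ) (ψ s) (ψ s) n
      = (((AcoefR J μ U n + J * ‖alphaM (M:ℝ) (ψ s)‖^2 : ℝ)):ℂ) * ψ s n := by
    unfold hTrunc opALin opAdM opAM
    rw [if_neg (by linarith), if_neg (by linarith), Acoef_eq]
    push_cast
    ring
  rw [h1]
  exact conj_mul_neg_I_real_re _ _

lemma tsum_weight_conserved {J μ U : ℝ} {M : ℕ} {ψ : ℝ → Seq}
    (hs : IsTruncSolution J μ U (M:ℝ) ψ) (w : ℕ → ℝ) (c : ℝ)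
    (hw : ∀ k, w (k+1) = w k + c)
    (hsum : ∀ s, Summable fun n => w n * ‖ψ s n‖^2) (t : ℝ) :
    ∑' n, w n * ‖ψ t n‖^2 = ∑' n, w n * ‖ψ 0 n‖^2 := by
  rw [← Summable.sum_add_tsum_nat_add (M+1) (hsum t), ← Summable.sum_add_tsum_nat_add (M+1) (hsum 0)]
  congr 1
  · exact block_weight_const hs w c hw t
  · apply tsum_congr; intro n
    rw [tail_norm_const hs (by omega) t]

lemma sNormSq_conserved {J μ U : ℝ} {M : ℕ} {ψ : ℝ → Seq}
    (hs : IsTruncSolution J μ U (M:ℝ) ψ) (t : ℝ) :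
    sNormSq (ψ t) = sNormSq (ψ 0) := by
  have h := tsum_weight_conserved hs (fun _ => 1) 0 (by intro k; ring)
    (fun s => by simpa [MemL2] using (hs.1 s).1) t
  unfold sNormSq
  simpa using h

lemma Nmom_one_eq (φ : Seq) : Nmom 1 φ = ∑' n : ℕ, (n:ℝ) * ‖φ n‖^2 := by
  unfold Nmom; exact tsum_congr fun n => by rw [Real.rpow_one]

lemma nmom1_conserved {J μ U : ℝ} {M : ℕ} {ψ : ℝ → Seq}
    (hs : IsTruncSolution J μ U (M:ℝ) ψ) (t : ℝ) :
    ∑' n : ℕ, (n:ℝ) * ‖ψ t n‖^2 = ∑' n : ℕ, (n:ℝ) * ‖ψ 0 n‖^2 :=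
  tsum_weight_conserved hs (fun n => (n:ℝ)) 1 (by intro k; push_cast; ring)
    (fun s => summable_mul_pow1 (hs.1 s)) t
lemma sum_weighted_shift_le {z : Seq} (hz : Summable fun m : ℕ => (m:ℝ)*‖z m‖^2) (M : ℕ) :
    ∑ n ∈ Finset.range M, ((n:ℝ)+1)*‖z (n+1)‖^2 ≤ ∑' m : ℕ, (m:ℝ)*‖z m‖^2 := by
  have e : ∑ m ∈ Finset.range (M+1), (m:ℝ)*‖z m‖^2
      = ∑ n ∈ Finset.range M, ((n:ℝ)+1)*‖z (n+1)‖^2 := by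
    rw [Finset.sum_range_succ']
    push_cast
    simp
  rw [← e]
  exact Summable.sum_le_tsum _ (fun i _ => by positivity) hz

lemma alphaM_norm_le (M : ℕ) {z : Seq}
    (hz2 : MemL2 z) (hz1 : Summable fun m : ℕ => (m:ℝ)*‖z m‖^2) :
    ‖alphaM (M:ℝ) z‖ ≤ (sNormSq z + ∑' m : ℕ, (m:ℝ)*‖z m‖^2)/2 := by
  rw [alphaM_eq_sum]
  refine le_trans (norm_sum_le _ _) ?_
  have hterm : ∀ n ∈ Finset.range M,
      ‖(starRingEnd ℂ) (z n) * (((Real.sqrt ((n:ℝ)+1):ℝ):ℂ) * z (n+1))‖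
      ≤ (‖z n‖^2 + ((n:ℝ)+1)*‖z (n+1)‖^2)/2 := by
    intro n _
    rw [norm_mul, norm_mul, RCLike.norm_conj, Complex.norm_real, Real.norm_eq_abs,
      _root_.abs_of_nonneg (Real.sqrt_nonneg _)]
    have hs2 : Real.sqrt ((n:ℝ)+1) ^ 2 = (n:ℝ)+1 := Real.sq_sqrt (by positivity)
    nlinarith [sq_nonneg (‖z n‖ - Real.sqrt ((n:ℝ)+1) * ‖z (n+1)‖), norm_nonneg (z n),
      norm_nonneg (z (n+1)), Real.sqrt_nonneg ((n:ℝ)+1)]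
  refine le_trans (Finset.sum_le_sum hterm) ?_
  rw [← Finset.sum_div, Finset.sum_add_distrib]
  have h1 : ∑ n ∈ Finset.range M, ‖z n‖^2 ≤ sNormSq z :=
    Summable.sum_le_tsum _ (fun i _ => by positivity) hz2
  have h2 := sum_weighted_shift_le hz1 M
  gcongr

lemma tail_sum_bound {z : Seq}
    (hz1 : Summable fun m : ℕ => (m:ℝ)*‖z m‖^2)
    {C : ℝ} (hC : ∑' m : ℕ, (m:ℝ)*‖z m‖^2 ≤ C)
    {K : ℕ} (hK : 1 ≤ K) (s : Finset ℕ) (hsK : ∀ n ∈ s, K ≤ n) :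
    ∑ n ∈ s, Real.sqrt ((n:ℝ)+1) * (‖z n‖ * ‖z (n+1)‖) ≤ 3*C/Real.sqrt (K:ℝ) := by
  have hC0 : 0 ≤ C := le_trans (tsum_nonneg (fun i => by positivity)) hC
  have hK0 : (0:ℝ) < Real.sqrt (K:ℝ) := Real.sqrt_pos.mpr (by exact_mod_cast hK)
  have hK1 : (0:ℝ) < Real.sqrt ((K:ℝ)+1) := Real.sqrt_pos.mpr (by positivity)
  have hterm : ∀ n ∈ s, Real.sqrt ((n:ℝ)+1) * (‖z n‖ * ‖z (n+1)‖)
      ≤ (((n:ℝ)+1)*‖z n‖^2 + ((n:ℝ)+1)*‖z (n+1)‖^2) / (2 * Real.sqrt ((K:ℝ)+1)) := by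
    intro n hn
    have hKn : (K:ℝ) ≤ (n:ℝ) := by exact_mod_cast hsK n hn
    have h1 : Real.sqrt ((n:ℝ)+1) * Real.sqrt ((K:ℝ)+1) ≤ (n:ℝ)+1 := by
      have := Real.sqrt_le_sqrt (show (K:ℝ)+1 ≤ (n:ℝ)+1 by linarith)
      have h2 : Real.sqrt ((n:ℝ)+1) * Real.sqrt ((n:ℝ)+1) = (n:ℝ)+1 :=
        Real.mul_self_sqrt (by positivity)
      nlinarith [Real.sqrt_nonneg ((n:ℝ)+1)]
    rw [le_div_iff₀ (by positivity)]
    nlinarith [sq_nonneg (‖z n‖ - ‖z (n+1)‖), norm_nonneg (z n), norm_nonneg (z (n+1)),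
      Real.sqrt_nonneg ((n:ℝ)+1), Real.sqrt_nonneg ((K:ℝ)+1),
      mul_nonneg (norm_nonneg (z n)) (norm_nonneg (z (n+1))),
      show (0:ℝ) ≤ (n:ℝ)+1 by positivity]
  refine le_trans (Finset.sum_le_sum hterm) ?_
  rw [← Finset.sum_div, Finset.sum_add_distrib]
  have hA : ∑ n ∈ s, ((n:ℝ)+1)*‖z n‖^2 ≤ 2*C := by
    have h1 : ∀ n ∈ s, ((n:ℝ)+1)*‖z n‖^2 ≤ 2*((n:ℝ)*‖z n‖^2) := by
      intro n hn
      have hKn : (1:ℝ) ≤ (n:ℝ) := by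
        have := hsK n hn; have : 1 ≤ n := le_trans hK this; exact_mod_cast this
      nlinarith [norm_nonneg (z n), sq_nonneg (‖z n‖)]
    refine le_trans (Finset.sum_le_sum h1) ?_
    rw [← Finset.mul_sum]
    have h2 : ∑ n ∈ s, (n:ℝ)*‖z n‖^2 ≤ C :=
      le_trans (Summable.sum_le_tsum s (fun i _ => by positivity) hz1) hC
    linarith
  have hB : ∑ n ∈ s, ((n:ℝ)+1)*‖z (n+1)‖^2 ≤ C := by
    have e : ∑ m ∈ s.image (fun k : ℕ => k + 1), ((m:ℝ))*‖z m‖^2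
        = ∑ n ∈ s, ((n:ℝ)+1)*‖z (n+1)‖^2 := by
      rw [Finset.sum_image (fun a _ b _ h => by omega)]
      push_cast
      rfl
    rw [← e]
    exact le_trans (Summable.sum_le_tsum _ (fun i _ => by positivity) hz1) hC
  have h3 : (∑ n ∈ s, ((n:ℝ)+1)*‖z n‖^2 + ∑ n ∈ s, ((n:ℝ)+1)*‖z (n+1)‖^2)
      / (2 * Real.sqrt ((K:ℝ)+1)) ≤ (3*C)/(2 * Real.sqrt ((K:ℝ)+1)) := by
    gcongr
    linarith
  refine le_trans h3 ?_
  rw [div_le_div_iff₀ (by positivity) hK0]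
  have h4 : Real.sqrt (K:ℝ) ≤ Real.sqrt ((K:ℝ)+1) := Real.sqrt_le_sqrt (by linarith)
  nlinarith [hK0, hK1]
lemma expA_norm_one (J μ U t : ℝ) (n : ℕ) :
    ‖Complex.exp (-Complex.I * (t:ℂ) * Acoef J μ U n)‖ = 1 := by
  rw [Acoef_eq, Complex.norm_exp]
  convert Real.exp_zero using 2
  simp [Complex.mul_re, Complex.mul_im]

lemma alphaM_continuous {J μ U : ℝ} {M : ℕ} {ψ : ℝ → Seq}
    (hs : IsTruncSolution J μ U (M:ℝ) ψ) :
    Continuous (fun s => alphaM (M:ℝ) (ψ s)) := by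
  have e : (fun s => alphaM (M:ℝ) (ψ s)) = fun s => ∑ n ∈ Finset.range M,
      (starRingEnd ℂ) (ψ s n) * (((Real.sqrt ((n:ℝ)+1):ℝ):ℂ) * ψ s (n+1)) := by
    funext s; rw [alphaM_eq_sum]
  rw [e]
  apply continuous_finset_sum
  intro n _
  exact ((continuous_conj.comp (trunc_coeff_continuous hs n)).mul
    (continuous_const.mul (trunc_coeff_continuous hs (n+1))))

lemma FM_coeff_continuous {J μ U : ℝ} {M : ℕ} {ψ : ℝ → Seq}
    (hs : IsTruncSolution J μ U (M:ℝ) ψ) (n : ℕ) :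
    Continuous (fun s => FM J (M:ℝ) (ψ s) n) := by
  have hα := alphaM_continuous hs
  have h1 : Continuous (fun s => opAdM (M:ℝ) (ψ s) n) := by
    unfold opAdM opAd
    by_cases hc : (n:ℝ) ≤ (M:ℝ)
    · simpa [hc] using continuous_const.fun_mul (trunc_coeff_continuous hs (n-1))
    · simpa [hc] using (continuous_const : Continuous fun _ : ℝ => (0:ℂ))
  have h2 : Continuous (fun s => opAM (M:ℝ) (ψ s) n) := by
    unfold opAM
    by_cases hc : (n:ℝ)+1 ≤ (M:ℝ)
    · simpa [hc] using continuous_const.fun_mul (trunc_coeff_continuous hs (n+1))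
    · simpa [hc] using (continuous_const : Continuous fun _ : ℝ => (0:ℂ))
  have hno : Continuous (fun s => ((‖alphaM (M:ℝ) (ψ s)‖:ℝ):ℂ)) :=
    Complex.continuous_ofReal.comp (continuous_norm.comp hα)
  unfold FM
  exact continuous_const.mul (((hα.mul h1).add
    ((continuous_conj.comp hα).mul h2)).sub ((hno.pow 2).mul (trunc_coeff_continuous hs n)))

lemma trunc_duhamel {J μ U : ℝ} {M : ℕ} {ψ : ℝ → Seq}
    (hs : IsTruncSolution J μ U (M:ℝ) ψ) (t : ℝ) (n : ℕ) :
    ψ t n = expA J μ U t (ψ 0) n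
      - Complex.I * ∫ s in (0:ℝ)..t, expA J μ U (t - s) (FM J (M:ℝ) (ψ s)) n := by
  set A := Acoef J μ U n with hA
  have hFMh : ∀ s : ℝ, hTrunc J μ U (M:ℝ) (ψ s) (ψ s) n
      = A * ψ s n + FM J (M:ℝ) (ψ s) n := by
    intro s; unfold hTrunc FM opALin; rw [hA]
  have hG : ∀ s : ℝ, HasDerivAt (fun u : ℝ => Complex.exp (Complex.I * (u:ℂ) * A) * ψ u n)
      (Complex.exp (Complex.I * (s:ℂ) * A) * (-Complex.I * FM J (M:ℝ) (ψ s) n)) s := by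
    intro s
    have hid : HasDerivAt (fun u : ℝ => (u:ℂ)) 1 s := by
      simpa using (hasDerivAt_id s).ofReal_comp
    have hlin : HasDerivAt (fun u : ℝ => Complex.I * (u:ℂ) * A) (Complex.I * A) s := by
      simpa [mul_comm, mul_assoc, mul_left_comm] using (hid.const_mul Complex.I).mul_const A
    have he := hlin.cexp
    have hψ := trunc_coeff_deriv hs s n
    have hm := he.mul hψ
    have hval : Complex.exp (Complex.I * (s:ℂ) * A) * (Complex.I * A) * ψ s n
        + Complex.exp (Complex.I * (s:ℂ) * A) * (-Complex.I * hTrunc J μ U (M:ℝ) (ψ s) (ψ s) n)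
        = Complex.exp (Complex.I * (s:ℂ) * A) * (-Complex.I * FM J (M:ℝ) (ψ s) n) := by
      rw [hFMh s]; ring
    exact hval ▸ hm
  have hcont : Continuous (fun s : ℝ =>
      Complex.exp (Complex.I * (s:ℂ) * A) * (-Complex.I * FM J (M:ℝ) (ψ s) n)) := by
    apply Continuous.mul
    · apply Complex.continuous_exp.comp
      exact (continuous_const.mul Complex.continuous_ofReal).mul continuous_const
    · exact continuous_const.mul (FM_coeff_continuous hs n)
  have hint := intervalIntegral.integral_eq_sub_of_hasDerivAt (a := 0) (b := t)
    (fun s _ => hG s) (hcont.intervalIntegrable 0 t)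
  have hee : Complex.exp (-Complex.I * (t:ℂ) * A) * Complex.exp (Complex.I * (t:ℂ) * A) = 1 := by
    rw [← Complex.exp_add]
    ring_nf
    exact Complex.exp_zero
  have h2 : ψ t n = Complex.exp (-Complex.I * (t:ℂ) * A) *
      (ψ 0 n + ∫ s in (0:ℝ)..t,
        Complex.exp (Complex.I * (s:ℂ) * A) * (-Complex.I * FM J (M:ℝ) (ψ s) n)) := by
    rw [hint]
    simp only [Complex.ofReal_zero, mul_zero, zero_mul, Complex.exp_zero, one_mul]
    rw [add_sub_cancel, ← mul_assoc, hee, one_mul]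
  have e1 : ∀ s : ℝ, expA J μ U (t-s) (FM J (M:ℝ) (ψ s)) n
      = (Complex.exp (-Complex.I*(t:ℂ)*A) * Complex.I) *
        (Complex.exp (Complex.I*(s:ℂ)*A) * (-Complex.I * FM J (M:ℝ) (ψ s) n)) := by
    intro s
    unfold expA
    rw [← hA, show -Complex.I*((t-s:ℝ):ℂ)*A = (-Complex.I*(t:ℂ)*A) + (Complex.I*(s:ℂ)*A) by
      push_cast; ring, Complex.exp_add]
    linear_combination (Complex.exp (-Complex.I*(t:ℂ)*A) * Complex.exp (Complex.I*(s:ℂ)*A)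
      * FM J (M:ℝ) (ψ s) n) * Complex.I_sq
  calc ψ t n = Complex.exp (-Complex.I * (t:ℂ) * A) *
      (ψ 0 n + ∫ s in (0:ℝ)..t,
        Complex.exp (Complex.I * (s:ℂ) * A) * (-Complex.I * FM J (M:ℝ) (ψ s) n)) := h2
    _ = expA J μ U t (ψ 0) n
      - Complex.I * ∫ s in (0:ℝ)..t, expA J μ U (t - s) (FM J (M:ℝ) (ψ s)) n := by
        rw [show (∫ s in (0:ℝ)..t, expA J μ U (t - s) (FM J (M:ℝ) (ψ s)) n)
            = ∫ s in (0:ℝ)..t, (Complex.exp (-Complex.I*(t:ℂ)*A) * Complex.I) *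
              (Complex.exp (Complex.I*(s:ℂ)*A) * (-Complex.I * FM J (M:ℝ) (ψ s) n)) from
          intervalIntegral.integral_congr (fun s _ => e1 s),
          intervalIntegral.integral_const_mul]
        unfold expA
        rw [← hA]
        linear_combination (Complex.exp (-Complex.I*(t:ℂ)*A) *
          ∫ s in (0:ℝ)..t, Complex.exp (Complex.I*(s:ℂ)*A)
            * (-Complex.I * FM J (M:ℝ) (ψ s) n)) * Complex.I_sq
/-- The terms of the order-parameter series. -/
def uTerm (z : Seq) (n : ℕ) : ℂ :=
  (starRingEnd ℂ) (z n) * (((Real.sqrt ((n:ℝ)+1) : ℝ):ℂ) * z (n+1))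

lemma alphaOf_eq (z : Seq) : alphaOf z = ∑' n, uTerm z n := rfl

lemma alphaM_eq_sum_u (M : ℕ) (z : Seq) :
    alphaM (M:ℝ) z = ∑ n ∈ Finset.range M, uTerm z n := alphaM_eq_sum M z

lemma norm_uTerm (z : Seq) (n : ℕ) :
    ‖uTerm z n‖ = Real.sqrt ((n:ℝ)+1) * (‖z n‖ * ‖z (n+1)‖) := by
  unfold uTerm
  rw [norm_mul, norm_mul, RCLike.norm_conj, Complex.norm_real, Real.norm_eq_abs,
    _root_.abs_of_nonneg (Real.sqrt_nonneg _)]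
  ring

lemma summable_shift_weight {z : Seq} (hz : Summable fun m : ℕ => (m:ℝ)*‖z m‖^2) :
    Summable fun n : ℕ => ((n:ℝ)+1)*‖z (n+1)‖^2 := by
  have h := (summable_nat_add_iff 1).mpr hz
  refine h.congr fun n => ?_
  push_cast
  ring

lemma summable_norm_uTerm {z : Seq} (hz2 : MemL2 z)
    (hz1 : Summable fun m : ℕ => (m:ℝ)*‖z m‖^2) :
    Summable fun n => ‖uTerm z n‖ := by
  refine Summable.of_nonneg_of_le (fun n => norm_nonneg _) (fun n => ?_)
    (((hz2.add (summable_shift_weight hz1))).div_const 2)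
  rw [norm_uTerm]
  have hs2 : Real.sqrt ((n:ℝ)+1) ^ 2 = (n:ℝ)+1 := Real.sq_sqrt (by positivity)
  nlinarith [sq_nonneg (‖z n‖ - Real.sqrt ((n:ℝ)+1) * ‖z (n+1)‖), norm_nonneg (z n),
    norm_nonneg (z (n+1)), Real.sqrt_nonneg ((n:ℝ)+1)]

lemma tendsto_coeff_of_sNormSq {χ : ℕ → Seq} {ζ : Seq}
    (hsm : ∀ M, Summable fun n => ‖χ M n - ζ n‖^2)
    (h : Tendsto (fun M => sNormSq (fun n => χ M n - ζ n)) atTop (nhds 0)) (n : ℕ) :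
    Tendsto (fun M => χ M n) atTop (nhds (ζ n)) := by
  have key : Tendsto (fun M => ‖χ M n - ζ n‖^2) atTop (nhds 0) :=
    squeeze_zero (fun M => sq_nonneg _) (fun M => sq_norm_le_sNormSq (hsm M) n) h
  have h3 := (Real.continuous_sqrt.tendsto 0).comp key
  simp only [Function.comp_def, Real.sqrt_zero] at h3
  have h4 : Tendsto (fun M => ‖χ M n - ζ n‖) atTop (nhds 0) := by
    convert h3 using 2 with M; rw [Real.sqrt_sq (norm_nonneg _)]
  have h5 : Tendsto (fun M => χ M n - ζ n) atTop (nhds 0) :=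
    tendsto_zero_iff_norm_tendsto_zero.mpr h4
  have := h5.add_const (ζ n)
  simpa using this

lemma limit_coeff_le_one {χ : ℕ → ℂ} {z : ℂ} (hb : ∀ M, ‖χ M‖ ≤ 1)
    (h : Tendsto χ atTop (nhds z)) : ‖z‖ ≤ 1 :=
  le_of_tendsto (h.norm) (Filter.Eventually.of_forall hb)

lemma limit_weight_summable {χ : ℕ → Seq} {ζ : Seq} {C : ℝ}
    (hcs : ∀ M, Summable fun m : ℕ => (m:ℝ)*‖χ M m‖^2)
    (hcC : ∀ M, ∑' m : ℕ, (m:ℝ)*‖χ M m‖^2 ≤ C)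
    (hconv : ∀ n, Tendsto (fun M => χ M n) atTop (nhds (ζ n))) :
    (Summable fun m : ℕ => (m:ℝ)*‖ζ m‖^2) ∧ ∑' m : ℕ, (m:ℝ)*‖ζ m‖^2 ≤ C := by
  have hpart : ∀ K : ℕ, ∑ m ∈ Finset.range K, (m:ℝ)*‖ζ m‖^2 ≤ C := by
    intro K
    have hlim : Tendsto (fun M => ∑ m ∈ Finset.range K, (m:ℝ)*‖χ M m‖^2) atTop
        (nhds (∑ m ∈ Finset.range K, (m:ℝ)*‖ζ m‖^2)) := by
      apply tendsto_finset_sum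
      intro m _
      exact (((hconv m).norm.pow 2).const_mul ((m:ℝ)))
    refine le_of_tendsto hlim (Filter.Eventually.of_forall fun M => ?_)
    exact le_trans (Summable.sum_le_tsum _ (fun i _ => by positivity) (hcs M)) (hcC M)
  exact ⟨summable_of_sum_range_le (fun m => by positivity) hpart,
    Summable.tsum_le_of_sum_range_le (summable_of_sum_range_le (fun m => by positivity) hpart) hpart⟩
lemma alpha_tendsto {χ : ℕ → Seq} {ζ : Seq} {C : ℝ}
    (hcs : ∀ M, Summable fun m : ℕ => (m:ℝ)*‖χ M m‖^2)
    (hcC : ∀ M, ∑' m : ℕ, (m:ℝ)*‖χ M m‖^2 ≤ C)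
    (hz2 : MemL2 ζ)
    (hzs : Summable fun m : ℕ => (m:ℝ)*‖ζ m‖^2)
    (hzC : ∑' m : ℕ, (m:ℝ)*‖ζ m‖^2 ≤ C)
    (hconv : ∀ n, Tendsto (fun M => χ M n) atTop (nhds (ζ n))) :
    Tendsto (fun M : ℕ => alphaM (M:ℝ) (χ M)) atTop (nhds (alphaOf ζ)) := by
  have hC0 : 0 ≤ C := le_trans (tsum_nonneg fun i => by positivity) (hcC 0)
  have hsum_u : Summable fun n => ‖uTerm ζ n‖ := summable_norm_uTerm hz2 hzs
  rw [Metric.tendsto_atTop]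
  intro ε hε
  set δ : ℝ := 12*C/ε + 1 with hδ
  have hδ1 : 1 ≤ δ := by
    have : 0 ≤ 12*C/ε := by positivity
    rw [hδ]; linarith
  obtain ⟨K, hK1, hsqK⟩ : ∃ K : ℕ, 1 ≤ K ∧ δ ≤ Real.sqrt (K:ℝ) := by
    refine ⟨⌈δ^2⌉₊, ?_, ?_⟩
    · have : (0:ℝ) < δ^2 := by nlinarith
      exact Nat.ceil_pos.mpr this
    · have h1 : δ^2 ≤ ((⌈δ^2⌉₊:ℕ):ℝ) := Nat.le_ceil _
      have h2 := Real.sqrt_le_sqrt h1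
      rwa [Real.sqrt_sq (by linarith)] at h2
  have hKb : 3*C/Real.sqrt (K:ℝ) < ε/4 := by
    have hδ0 : (0:ℝ) < δ := by linarith
    have hsK0 : (0:ℝ) < Real.sqrt (K:ℝ) := by linarith
    have h1 : 3*C/Real.sqrt (K:ℝ) ≤ 3*C/δ :=
      div_le_div_of_nonneg_left (by linarith) hδ0 hsqK
    have h2 : 3*C/δ < ε/4 := by
      rw [div_lt_iff₀ hδ0, hδ]
      have : ε/4 * (12*C/ε) = 3*C := by field_simp; ring
      nlinarith
    linarith
  -- head convergence
  have hhead : Tendsto (fun M => ∑ n ∈ Finset.range K, uTerm (χ M) n) atTop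
      (nhds (∑ n ∈ Finset.range K, uTerm ζ n)) := by
    apply tendsto_finset_sum
    intro n _
    unfold uTerm
    exact ((Complex.continuous_conj.tendsto (ζ n)).comp (hconv n)).mul
      ((tendsto_const_nhds).mul (hconv (n+1)))
  obtain ⟨M₀, hM₀⟩ := (Metric.tendsto_atTop.mp hhead) (ε/4) (by linarith)
  refine ⟨max M₀ K, fun M hM => ?_⟩
  have hMM₀ : M₀ ≤ M := le_trans (le_max_left _ _) hM
  have hKM : K ≤ M := le_trans (le_max_right _ _) hM
  -- decompositions
  have hsplit : alphaM (M:ℝ) (χ M) = (∑ n ∈ Finset.range K, uTerm (χ M) n)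
      + ∑ n ∈ Finset.Ico K M, uTerm (χ M) n := by
    rw [alphaM_eq_sum_u]
    simp only [Finset.range_eq_Ico]
    rw [← Finset.sum_Ico_consecutive _ (Nat.zero_le K) hKM]
  have htsplit : alphaOf ζ = (∑ n ∈ Finset.range K, uTerm ζ n)
      + ∑' n : ℕ, uTerm ζ (n+K) := by
    rw [alphaOf_eq, ← Summable.sum_add_tsum_nat_add K hsum_u.of_norm]
  -- mid bound
  have hmid : ‖∑ n ∈ Finset.Ico K M, uTerm (χ M) n‖ ≤ 3*C/Real.sqrt (K:ℝ) := by
    refine le_trans (norm_sum_le _ _) ?_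
    have e : ∀ n ∈ Finset.Ico K M, ‖uTerm (χ M) n‖
        = Real.sqrt ((n:ℝ)+1) * (‖χ M n‖ * ‖χ M (n+1)‖) := fun n _ => norm_uTerm _ n
    rw [Finset.sum_congr rfl e]
    exact tail_sum_bound (hcs M) (hcC M) hK1 _ (fun n hn => (Finset.mem_Ico.mp hn).1)
  -- tail bound
  have htail : ‖∑' n : ℕ, uTerm ζ (n+K)‖ ≤ 3*C/Real.sqrt (K:ℝ) := by
    have hsn : Summable fun n : ℕ => ‖uTerm ζ (n+K)‖ := by
      exact (summable_nat_add_iff K).mpr hsum_u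
    refine le_trans (norm_tsum_le_tsum_norm hsn) ?_
    refine Summable.tsum_le_of_sum_range_le hsn fun m => ?_
    have e : ∑ i ∈ Finset.range m, ‖uTerm ζ (i+K)‖
        = ∑ n ∈ Finset.Ico K (K+m), ‖uTerm ζ n‖ := by
      rw [Finset.sum_Ico_eq_sum_range]
      simp only [Nat.add_sub_cancel_left]
      exact Finset.sum_congr rfl fun i _ => by rw [Nat.add_comm K i]
    rw [e]
    have e2 : ∀ n ∈ Finset.Ico K (K+m), ‖uTerm ζ n‖
        = Real.sqrt ((n:ℝ)+1) * (‖ζ n‖ * ‖ζ (n+1)‖) := fun n _ => norm_uTerm _ n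
    rw [Finset.sum_congr rfl e2]
    exact tail_sum_bound hzs hzC hK1 _ (fun n hn => (Finset.mem_Ico.mp hn).1)
  -- assemble
  have hhd := hM₀ M hMM₀
  rw [dist_eq_norm] at hhd ⊢
  have e3 : alphaM (M:ℝ) (χ M) - alphaOf ζ
      = ((∑ n ∈ Finset.range K, uTerm (χ M) n) - ∑ n ∈ Finset.range K, uTerm ζ n)
        + ((∑ n ∈ Finset.Ico K M, uTerm (χ M) n) - ∑' n : ℕ, uTerm ζ (n+K)) := by
    rw [hsplit, htsplit]; ring
  have t1 : ‖alphaM (M:ℝ) (χ M) - alphaOf ζ‖ ≤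
      ‖(∑ n ∈ Finset.range K, uTerm (χ M) n) - ∑ n ∈ Finset.range K, uTerm ζ n‖
      + (‖∑ n ∈ Finset.Ico K M, uTerm (χ M) n‖ + ‖∑' n : ℕ, uTerm ζ (n+K)‖) := by
    rw [e3]
    refine le_trans (norm_add_le _ _) ?_
    have h9 := norm_sub_le (∑ n ∈ Finset.Ico K M, uTerm (χ M) n) (∑' n : ℕ, uTerm ζ (n+K))
    linarith
  linarith [hhd, hmid, htail, t1]
lemma FM_norm_bound {J : ℝ} (Mr : ℝ) (χ : Seq) {Cα : ℝ}
    (hα : ‖alphaM Mr χ‖ ≤ Cα) (hb : ∀ k, ‖χ k‖ ≤ 1) (n : ℕ) :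
    ‖FM J Mr χ n‖ ≤ |J| * (2*Cα*Real.sqrt ((n:ℝ)+1) + Cα^2) := by
  have hα0 : 0 ≤ Cα := le_trans (norm_nonneg _) hα
  have hn0 : (0:ℝ) ≤ (n:ℝ) := Nat.cast_nonneg n
  have hs1 : Real.sqrt (n:ℝ) ≤ Real.sqrt ((n:ℝ)+1) := Real.sqrt_le_sqrt (by linarith)
  have had : ‖opAdM Mr χ n‖ ≤ Real.sqrt ((n:ℝ)+1) := by
    unfold opAdM opAd
    split_ifs
    · rw [norm_mul, Complex.norm_real, Real.norm_eq_abs,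
        _root_.abs_of_nonneg (Real.sqrt_nonneg _)]
      calc Real.sqrt (n:ℝ) * ‖χ (n-1)‖ ≤ Real.sqrt (n:ℝ) * 1 := by
            gcongr; exact hb _
        _ ≤ Real.sqrt ((n:ℝ)+1) := by rw [mul_one]; exact hs1
    · simp [Real.sqrt_nonneg]
  have ham : ‖opAM Mr χ n‖ ≤ Real.sqrt ((n:ℝ)+1) := by
    unfold opAM
    split_ifs
    · rw [norm_mul, Complex.norm_real, Real.norm_eq_abs,
        _root_.abs_of_nonneg (Real.sqrt_nonneg _)]
      calc Real.sqrt ((n:ℝ)+1) * ‖χ (n+1)‖ ≤ Real.sqrt ((n:ℝ)+1) * 1 := by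
            gcongr; exact hb _
        _ = Real.sqrt ((n:ℝ)+1) := mul_one _
    · simp [Real.sqrt_nonneg]
  unfold FM
  rw [norm_mul, show ‖(-(J:ℂ))‖ = |J| by
    rw [norm_neg, Complex.norm_real, Real.norm_eq_abs]]
  have hinner : ‖alphaM Mr χ * opAdM Mr χ n + (starRingEnd ℂ) (alphaM Mr χ) * opAM Mr χ n
      - ((‖alphaM Mr χ‖:ℝ):ℂ)^2 * χ n‖ ≤ 2*Cα*Real.sqrt ((n:ℝ)+1) + Cα^2 := by
    refine le_trans (norm_sub_le _ _) ?_
    have h2 := norm_add_le (alphaM Mr χ * opAdM Mr χ n)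
      ((starRingEnd ℂ) (alphaM Mr χ) * opAM Mr χ n)
    rw [norm_mul, norm_mul, RCLike.norm_conj] at h2
    rw [norm_mul]
    have h3 : ‖(((‖alphaM Mr χ‖:ℝ):ℂ))^2‖ = ‖alphaM Mr χ‖^2 := by
      rw [norm_pow, Complex.norm_real, Real.norm_eq_abs,
        _root_.abs_of_nonneg (norm_nonneg _)]
    rw [h3]
    have p1 : ‖alphaM Mr χ‖ * ‖opAdM Mr χ n‖ ≤ Cα * Real.sqrt ((n:ℝ)+1) :=
      mul_le_mul hα had (norm_nonneg _) hα0
    have p2 : ‖alphaM Mr χ‖ * ‖opAM Mr χ n‖ ≤ Cα * Real.sqrt ((n:ℝ)+1) :=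
      mul_le_mul hα ham (norm_nonneg _) hα0
    have p3a : ‖alphaM Mr χ‖^2 ≤ Cα^2 := by nlinarith [norm_nonneg (alphaM Mr χ)]
    have p3 : ‖alphaM Mr χ‖^2 * ‖χ n‖ ≤ Cα^2 := by
      nlinarith [norm_nonneg (χ n), hb n, sq_nonneg (‖alphaM Mr χ‖)]
    linarith
  have hJ0 : (0:ℝ) ≤ |J| := abs_nonneg J
  nlinarith [norm_nonneg (alphaM Mr χ * opAdM Mr χ n + (starRingEnd ℂ) (alphaM Mr χ) * opAM Mr χ n
      - ((‖alphaM Mr χ‖:ℝ):ℂ)^2 * χ n)]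
/-- The strong limit `φ` of the truncated solutions `φ_M` satisfies the
Duhamel form of the mean-field equation
`φ(t) = e^{-itA} φ₀ - i ∫₀ᵗ e^{-i(t-s)A} F(φ(s)) ds`. -/
theorem limit_satisfies_duhamel
    (J μ U : ℝ) (φ0 : Seq) (hdom : MemDomN 2 φ0) (hnorm : sNormSq φ0 = 1)
    (φM : ℕ → ℝ → Seq)
    (hsol : ∀ M : ℕ, IsTruncSolution J μ U (M : ℝ) (φM M) ∧ φM M 0 = φ0)
    (φ : ℝ → Seq) (hφ2 : ∀ t, MemL2 (φ t))
    (hstrong : ∀ t : ℝ, Tendsto (fun M => sNormSq (fun n => φM M t n - φ t n)) atTop (nhds 0)) :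
    ∀ t : ℝ, ∀ n : ℕ, φ t n = expA J μ U t φ0 n -
      Complex.I * ∫ s in (0:ℝ)..t, expA J μ U (t - s) (Ffull J (φ s)) n := by
  intro t n
  set C₁ := Nmom 1 φ0 with hC₁
  have hsolM : ∀ M : ℕ, IsTruncSolution J μ U (M:ℝ) (φM M) := fun M => (hsol M).1
  have h0M : ∀ M, φM M 0 = φ0 := fun M => (hsol M).2
  have hnormM : ∀ (M : ℕ) (s : ℝ), sNormSq (φM M s) = 1 := by
    intro M s; rw [sNormSq_conserved (hsolM M) s, h0M M, hnorm]
  have hcoeff1 : ∀ (M : ℕ) (s : ℝ) (k : ℕ), ‖φM M s k‖ ≤ 1 := by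
    intro M s k
    have h1 : ‖φM M s k‖^2 ≤ 1 := by
      have h2 := sq_norm_le_sNormSq ((hsolM M).1 s).1 k
      rwa [hnormM M s] at h2
    nlinarith [norm_nonneg (φM M s k)]
  have hmomsum : ∀ (M : ℕ) (s : ℝ), Summable fun m : ℕ => (m:ℝ)*‖φM M s m‖^2 :=
    fun M s => summable_mul_pow1 ((hsolM M).1 s)
  have hmomC : ∀ (M : ℕ) (s : ℝ), ∑' m : ℕ, (m:ℝ)*‖φM M s m‖^2 = C₁ := by
    intro M s
    rw [nmom1_conserved (hsolM M) s, h0M M, hC₁, Nmom_one_eq]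
  have hdiffsm : ∀ (s : ℝ) (M : ℕ), Summable fun k => ‖φM M s k - φ s k‖^2 := fun s M =>
    (((hsolM M).1 s).1.sub (hφ2 s))
  have hcc : ∀ (s : ℝ) (k : ℕ), Tendsto (fun M => φM M s k) atTop (nhds (φ s k)) := fun s k =>
    tendsto_coeff_of_sNormSq (hdiffsm s) (hstrong s) k
  have hφb : ∀ (s : ℝ) (k : ℕ), ‖φ s k‖ ≤ 1 := fun s k =>
    limit_coeff_le_one (fun M => hcoeff1 M s k) (hcc s k)
  have hφmom : ∀ s : ℝ, (Summable fun m : ℕ => (m:ℝ)*‖φ s m‖^2)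
      ∧ ∑' m : ℕ, (m:ℝ)*‖φ s m‖^2 ≤ C₁ :=
    fun s => limit_weight_summable (fun M => hmomsum M s)
      (fun M => le_of_eq (hmomC M s)) (hcc s)
  have halpha : ∀ s : ℝ, Tendsto (fun M : ℕ => alphaM (M:ℝ) (φM M s)) atTop
      (nhds (alphaOf (φ s))) :=
    fun s => alpha_tendsto (fun M => hmomsum M s) (fun M => le_of_eq (hmomC M s)) (hφ2 s)
      (hφmom s).1 (hφmom s).2 (hcc s)
  -- the truncated Duhamel formulas
  have hduh : ∀ M : ℕ, φM M t n = expA J μ U t φ0 n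
      - Complex.I * ∫ s in (0:ℝ)..t, expA J μ U (t - s) (FM J (M:ℝ) (φM M s)) n := by
    intro M
    have h1 := trunc_duhamel (hsolM M) t n
    rwa [h0M M] at h1
  -- uniform bound on alpha
  set Cα : ℝ := (1 + C₁)/2 with hCα
  have hαbd : ∀ (M : ℕ) (s : ℝ), ‖alphaM (M:ℝ) (φM M s)‖ ≤ Cα := by
    intro M s
    have h1 := alphaM_norm_le M ((hsolM M).1 s).1 (hmomsum M s)
    rwa [hnormM M s, hmomC M s] at h1
  -- pointwise convergence of the integrands
  have hFMpt : ∀ s : ℝ, Tendsto (fun M : ℕ => FM J (M:ℝ) (φM M s) n) atTop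
      (nhds (Ffull J (φ s) n)) := by
    intro s
    have hmain : Tendsto (fun M : ℕ => (-(J:ℂ)) *
        (alphaM (M:ℝ) (φM M s) * (((Real.sqrt (n:ℝ) : ℝ):ℂ) * φM M s (n-1))
        + (starRingEnd ℂ) (alphaM (M:ℝ) (φM M s)) *
            (((Real.sqrt ((n:ℝ)+1) : ℝ):ℂ) * φM M s (n+1))
        - (((‖alphaM (M:ℝ) (φM M s)‖:ℝ):ℂ))^2 * φM M s n)) atTop
        (nhds (Ffull J (φ s) n)) := by
      unfold Ffull opAd opA
      apply Tendsto.const_mul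
      refine Tendsto.sub (Tendsto.add ?_ ?_) ?_
      · exact (halpha s).mul (tendsto_const_nhds.mul (hcc s (n-1)))
      · exact ((Complex.continuous_conj.tendsto _).comp (halpha s)).mul
          (tendsto_const_nhds.mul (hcc s (n+1)))
      · exact (((Complex.continuous_ofReal.tendsto _).comp ((halpha s).norm)).pow 2).mul
          (hcc s n)
    refine Tendsto.congr' ?_ hmain
    filter_upwards [Filter.eventually_ge_atTop (n+1)] with M hM
    have hc1 : (n:ℝ) ≤ (M:ℝ) := by
      have : n ≤ M := by omega
      exact_mod_cast this
    have hc2 : (n:ℝ)+1 ≤ (M:ℝ) := by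
      have : ((n+1:ℕ):ℝ) ≤ (M:ℝ) := by exact_mod_cast hM
      push_cast at this; linarith
    unfold FM opAdM opAM opAd
    rw [if_pos hc1, if_pos hc2]
  -- continuity (hence measurability) of the truncated integrands
  have hFncont : ∀ M : ℕ,
      Continuous (fun s => expA J μ U (t - s) (FM J (M:ℝ) (φM M s)) n) := by
    intro M
    unfold expA
    apply Continuous.mul
    · apply Complex.continuous_exp.comp
      exact (continuous_const.mul
        (Complex.continuous_ofReal.comp (continuous_const.sub continuous_id))).mul
        continuous_const
    · exact FM_coeff_continuous (hsolM M) n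
  -- uniform bound on the integrands
  set B : ℝ := |J| * (2*Cα*Real.sqrt ((n:ℝ)+1) + Cα^2) with hB
  have hFnbd : ∀ (M : ℕ) (s : ℝ), ‖expA J μ U (t - s) (FM J (M:ℝ) (φM M s)) n‖ ≤ B := by
    intro M s
    unfold expA
    rw [norm_mul, expA_norm_one, one_mul, hB]
    exact FM_norm_bound (M:ℝ) (φM M s) (hαbd M s) (hcoeff1 M s) n
  -- dominated convergence
  have hlim : Tendsto (fun M : ℕ => ∫ s in (0:ℝ)..t,
      expA J μ U (t - s) (FM J (M:ℝ) (φM M s)) n) atTop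
      (nhds (∫ s in (0:ℝ)..t, expA J μ U (t - s) (Ffull J (φ s)) n)) := by
    apply intervalIntegral.tendsto_integral_filter_of_dominated_convergence
      (bound := fun _ => B)
    · exact Filter.Eventually.of_forall fun M =>
        ((hFncont M).aestronglyMeasurable)
    · exact Filter.Eventually.of_forall fun M =>
        (MeasureTheory.ae_of_all _ fun s _ => hFnbd M s)
    · exact intervalIntegrable_const
    · refine MeasureTheory.ae_of_all _ fun s _ => ?_
      unfold expA
      exact Tendsto.const_mul _ (hFMpt s)
  have hfinal : Tendsto (fun M : ℕ => φM M t n) atTop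
      (nhds (expA J μ U t φ0 n
        - Complex.I * ∫ s in (0:ℝ)..t, expA J μ U (t - s) (Ffull J (φ s)) n)) := by
    refine Tendsto.congr (fun M => (hduh M).symm) ?_
    exact tendsto_const_nhds.sub (hlim.const_mul Complex.I)
  exact tendsto_nhds_unique (hcc t n) hfinal

end

end BoseHubbard
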